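/- arXiv:0810.0947 — 2 statements merged into one kernel-verified Lean document; each statement's English description precedes it below -/
import Mathlib

section
/- If F has cotype q ≥ 2, then for any Banach spaces E₁,…,Eₙ, every bounded n-linear operator T : E₁×⋯×Eₙ → F is multiple (q;1,…,1)-summing: there exists C with (∑_{j₁,…,jₙ=1}^m ‖T(x_{j₁}^{(1)},…,x_{jₙ}^{(n)})‖^q)^{1/q} ≤ C‖T‖ ∏_{i=1}^n ‖(x_j^{(i)})_{j=1}^m‖_{w,1}. -/
open scoped BigOperators

/-- The weak `ℓ_p` norm of a finite family in a normed space. -/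
noncomputable def weakNorm (𝕜 : Type*) [RCLike 𝕜] {E : Type*} [NormedAddCommGroup E]
    [NormedSpace 𝕜 E] (p : ℝ) {m : ℕ} (x : Fin m → E) : ℝ :=
  sSup {s | ∃ φ : E →L[𝕜] 𝕜, ‖φ‖ ≤ 1 ∧ s = (∑ j, ‖φ (x j)‖ ^ p) ^ p⁻¹}

/-- A normed group `E` has cotype `q`: `(∑‖x_k‖^q)^{1/q}` is dominated by a constant times
the average of `‖∑ ± x_k‖` in the `L²` sense over all choices of signs. -/
def HasCotype (q : ℝ) (E : Type*) [NormedAddCommGroup E] : Prop :=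
  ∃ C > 0, ∀ (k : ℕ) (x : Fin k → E),
    (∑ i, ‖x i‖ ^ q) ^ q⁻¹ ≤
      C * (((2 : ℝ) ^ k)⁻¹ *
        ∑ ε : Fin k → Bool, ‖∑ i, (if ε i then x i else -x i)‖ ^ (2 : ℝ)) ^ (2 : ℝ)⁻¹

section lemmas

variable {𝕜 : Type*} [RCLike 𝕜] {E : Type*} [NormedAddCommGroup E] [NormedSpace 𝕜 E] {m : ℕ}

lemma weakNorm_bddAbove (x : Fin m → E) :
    BddAbove {s | ∃ φ : E →L[𝕜] 𝕜, ‖φ‖ ≤ 1 ∧ s = (∑ j, ‖φ (x j)‖ ^ (1:ℝ)) ^ (1:ℝ)⁻¹} := by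
  refine ⟨∑ j, ‖x j‖, ?_⟩
  rintro s ⟨φ, hφ, rfl⟩
  simp only [Real.rpow_one, inv_one]
  refine Finset.sum_le_sum fun j _ => (φ.le_opNorm _).trans ?_
  exact mul_le_of_le_one_left (norm_nonneg _) hφ

lemma sum_norm_apply_le_weakNorm (x : Fin m → E) (φ : E →L[𝕜] 𝕜) (hφ : ‖φ‖ ≤ 1) :
    ∑ j, ‖φ (x j)‖ ≤ weakNorm 𝕜 1 x :=
  le_csSup (weakNorm_bddAbove x) ⟨φ, hφ, by simp [Real.rpow_one]⟩

lemma weakNorm_nonneg (x : Fin m → E) : 0 ≤ weakNorm 𝕜 1 x := by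
  have h := sum_norm_apply_le_weakNorm x (0 : E →L[𝕜] 𝕜) (by simp)
  simpa using h

lemma norm_signed_sum_le_weakNorm (x : Fin m → E) (ε : Fin m → Bool) :
    ‖∑ j, (if ε j then x j else -x j)‖ ≤ weakNorm 𝕜 1 x := by
  set u := ∑ j, (if ε j then x j else -x j) with hu
  obtain ⟨g, hg1, hgu⟩ := exists_dual_vector'' 𝕜 u
  have h1 : ‖u‖ = ‖g u‖ := by rw [hgu]; simp [abs_of_nonneg (norm_nonneg u)]
  calc ‖u‖ = ‖g u‖ := h1
    _ ≤ ∑ j, ‖g (x j)‖ := by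
        rw [hu, map_sum]
        refine (norm_sum_le _ _).trans (Finset.sum_le_sum fun j _ => ?_)
        by_cases h : ε j <;> simp [h]
    _ ≤ weakNorm 𝕜 1 x := sum_norm_apply_le_weakNorm x g hg1

end lemmas

section cotype

variable {F : Type*} [NormedAddCommGroup F]

lemma cotype_step (q C : ℝ) (hq : 2 ≤ q) (hC : 0 < C)
    (hcot : ∀ (k : ℕ) (y : Fin k → F), (∑ i, ‖y i‖ ^ q) ^ q⁻¹ ≤
      C * (((2 : ℝ) ^ k)⁻¹ *
        ∑ ε : Fin k → Bool, ‖∑ i, (if ε i then y i else -y i)‖ ^ (2 : ℝ)) ^ (2 : ℝ)⁻¹)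
    (m : ℕ) (y : Fin m → F) :
    ∑ j, ‖y j‖ ^ q ≤
      C ^ q * ∑ ε : Fin m → Bool,
        ((2 : ℝ) ^ m)⁻¹ * ‖∑ j, (if ε j then y j else -y j)‖ ^ q := by
  have hq0 : (0:ℝ) < q := by linarith
  set A : ℝ := ((2 : ℝ) ^ m)⁻¹ *
      ∑ ε : Fin m → Bool, ‖∑ j, (if ε j then y j else -y j)‖ ^ (2:ℝ) with hA
  have hAnn : 0 ≤ A := by
    refine mul_nonneg (by positivity) (Finset.sum_nonneg fun ε _ => ?_)
    exact Real.rpow_nonneg (norm_nonneg _) _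
  have hS : 0 ≤ ∑ j, ‖y j‖ ^ q :=
    Finset.sum_nonneg fun j _ => Real.rpow_nonneg (norm_nonneg _) _
  have h1 := hcot m y
  have h2 := Real.rpow_le_rpow (Real.rpow_nonneg hS _) h1 hq0.le
  rw [← Real.rpow_mul hS, inv_mul_cancel₀ hq0.ne', Real.rpow_one,
    Real.mul_rpow hC.le (Real.rpow_nonneg hAnn _), ← Real.rpow_mul hAnn] at h2
  refine h2.trans (mul_le_mul_of_nonneg_left ?_ (Real.rpow_nonneg hC.le _))
  have hw' : ∑ _ε : Fin m → Bool, ((2:ℝ) ^ m)⁻¹ = 1 := by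
    rw [Finset.sum_const, Finset.card_univ, nsmul_eq_mul]
    have : Fintype.card (Fin m → Bool) = 2 ^ m := by simp [Fintype.card_fun]
    rw [this]
    push_cast
    exact mul_inv_cancel₀ (by positivity)
  have hp : 1 ≤ 2⁻¹ * q := by linarith
  have hjen := Real.rpow_arith_mean_le_arith_mean_rpow Finset.univ
    (fun _ : Fin m → Bool => ((2:ℝ) ^ m)⁻¹)
    (fun ε => ‖∑ j, (if ε j then y j else -y j)‖ ^ (2:ℝ))
    (fun _ _ => by positivity) hw'
    (fun ε _ => Real.rpow_nonneg (norm_nonneg _) _) hp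
  rw [hA, Finset.mul_sum]
  refine hjen.trans (le_of_eq (Finset.sum_congr rfl fun ε _ => ?_))
  congr 1
  rw [← Real.rpow_mul (norm_nonneg _), show (2:ℝ) * (2⁻¹ * q) = q from by ring]

end cotype

universe u v w

lemma aux_summing {𝕜 : Type u} [RCLike 𝕜] {F : Type v} [NormedAddCommGroup F] [NormedSpace 𝕜 F]
    (q C : ℝ) (hq : 2 ≤ q) (hC : 0 < C)
    (hcot : ∀ (k : ℕ) (y : Fin k → F), (∑ i, ‖y i‖ ^ q) ^ q⁻¹ ≤
      C * (((2 : ℝ) ^ k)⁻¹ *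
        ∑ ε : Fin k → Bool, ‖∑ i, (if ε i then y i else -y i)‖ ^ (2 : ℝ)) ^ (2 : ℝ)⁻¹) :
    ∀ (n : ℕ) (E : Fin n → Type w) (_inst1 : ∀ i, NormedAddCommGroup (E i))
      (_inst2 : ∀ i, NormedSpace 𝕜 (E i)) (T : ContinuousMultilinearMap 𝕜 E F)
      (m : ℕ) (x : ∀ i, Fin m → E i),
      ∑ j : Fin n → Fin m, ‖T (fun i => x i (j i))‖ ^ q ≤
        (C ^ n * ‖T‖ * ∏ i, weakNorm 𝕜 1 (x i)) ^ q := by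
  have hq0 : (0:ℝ) < q := by linarith
  intro n
  induction n with
  | zero =>
    intro E inst1 inst2 T m x
    rw [Fintype.sum_unique]
    refine Real.rpow_le_rpow (norm_nonneg _) ?_ hq0.le
    have := T.le_opNorm (fun i => x i ((default : Fin 0 → Fin m) i))
    simpa using this
  | succ n IH =>
    intro E inst1 inst2 T m x
    classical
    set w0 := weakNorm 𝕜 1 (x 0) with hw0
    set W := ∏ i : Fin n, weakNorm 𝕜 1 (x i.succ) with hW
    have hw0n : 0 ≤ w0 := weakNorm_nonneg _
    have hWn : 0 ≤ W := Finset.prod_nonneg fun i _ => weakNorm_nonneg _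
    have hTn : (0:ℝ) ≤ ‖T‖ := norm_nonneg _
    set u : (Fin m → Bool) → E 0 := fun ε => ∑ j, (if ε j then x 0 j else -(x 0 j)) with hu
    have hsum : ∑ j : Fin (n+1) → Fin m, ‖T (fun i => x i (j i))‖ ^ q
        = ∑ j' : Fin n → Fin m, ∑ j0 : Fin m,
            ‖T (Fin.cons (x 0 j0) (fun i => x i.succ (j' i)))‖ ^ q := by
      rw [← Fintype.sum_equiv (Fin.consEquiv fun _ : Fin (n+1) => Fin m)
        (fun jp => ‖T (Fin.cons (x 0 jp.1) (fun i => x i.succ (jp.2 i)))‖ ^ q)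
        (fun j => ‖T (fun i => x i (j i))‖ ^ q) ?_]
      · rw [Fintype.sum_prod_type, Finset.sum_comm]
      · intro jp
        have he : (Fin.cons (x 0 jp.1) (fun i => x i.succ (jp.2 i)) : ∀ i, E i)
            = fun i => x i (Fin.cons (α := fun _ => Fin m) jp.1 jp.2 i) := by
          funext i
          refine Fin.cases ?_ (fun i => ?_) i <;> simp
        simp only [Fin.consEquiv_apply]
        rw [he]
    rw [hsum]
    -- the inner sign-sum identity
    have hkey : ∀ (ε : Fin m → Bool) (v : ∀ i : Fin n, E i.succ),
        ∑ j0 : Fin m, (if ε j0 then T (Fin.cons (x 0 j0) v) else -(T (Fin.cons (x 0 j0) v)))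
          = (T.curryLeft (u ε)) v := by
      intro ε v
      rw [hu]
      simp only [map_sum, ContinuousMultilinearMap.sum_apply,
        apply_ite T.curryLeft, map_neg, ContinuousMultilinearMap.neg_apply,
        ContinuousMultilinearMap.curryLeft_apply, apply_ite (fun f : ContinuousMultilinearMap 𝕜
          (fun i : Fin n => E i.succ) F => f v)]
    -- step 1: cotype in the first variable
    have step1 : ∀ j' : Fin n → Fin m,
        ∑ j0 : Fin m, ‖T (Fin.cons (x 0 j0) (fun i => x i.succ (j' i)))‖ ^ q ≤
          C ^ q * ∑ ε : Fin m → Bool, ((2:ℝ) ^ m)⁻¹ *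
            ‖(T.curryLeft (u ε)) (fun i => x i.succ (j' i))‖ ^ q := by
      intro j'
      have := cotype_step q C hq hC hcot m
        (fun j0 => T (Fin.cons (x 0 j0) (fun i => x i.succ (j' i))))
      refine this.trans (le_of_eq ?_)
      congr 1
      refine Finset.sum_congr rfl fun ε _ => ?_
      rw [hkey ε (fun i => x i.succ (j' i))]
    -- step 2: IH for each ε
    have step2 : ∀ ε : Fin m → Bool,
        ∑ j' : Fin n → Fin m, ‖(T.curryLeft (u ε)) (fun i => x i.succ (j' i))‖ ^ q ≤
          (C ^ n * (‖T‖ * w0) * W) ^ q := by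
      intro ε
      have h1 := IH (fun i => E i.succ) (fun i => inst1 i.succ) (fun i => inst2 i.succ)
        (T.curryLeft (u ε)) m (fun i => x i.succ)
      refine h1.trans (Real.rpow_le_rpow ?_ ?_ hq0.le)
      · exact mul_nonneg (mul_nonneg (pow_nonneg hC.le _) (norm_nonneg _)) hWn
      · rw [← hW]
        refine mul_le_mul_of_nonneg_right ?_ hWn
        refine mul_le_mul_of_nonneg_left ?_ (pow_nonneg hC.le _)
        calc ‖T.curryLeft (u ε)‖ ≤ ‖T.curryLeft‖ * ‖u ε‖ := ContinuousLinearMap.le_opNorm _ _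
          _ ≤ ‖T‖ * w0 := by
              rw [T.curryLeft_norm]
              exact mul_le_mul_of_nonneg_left (norm_signed_sum_le_weakNorm _ ε) hTn
    -- combine
    calc ∑ j' : Fin n → Fin m, ∑ j0 : Fin m,
          ‖T (Fin.cons (x 0 j0) (fun i => x i.succ (j' i)))‖ ^ q
        ≤ ∑ j' : Fin n → Fin m, C ^ q * ∑ ε : Fin m → Bool, ((2:ℝ) ^ m)⁻¹ *
            ‖(T.curryLeft (u ε)) (fun i => x i.succ (j' i))‖ ^ q :=
          Finset.sum_le_sum fun j' _ => step1 j'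
      _ = C ^ q * ∑ ε : Fin m → Bool, ((2:ℝ) ^ m)⁻¹ *
            ∑ j' : Fin n → Fin m, ‖(T.curryLeft (u ε)) (fun i => x i.succ (j' i))‖ ^ q := by
          rw [← Finset.mul_sum, Finset.sum_comm]
          congr 1
          refine Finset.sum_congr rfl fun ε _ => ?_
          rw [Finset.mul_sum]
      _ ≤ C ^ q * ∑ ε : Fin m → Bool, ((2:ℝ) ^ m)⁻¹ * (C ^ n * (‖T‖ * w0) * W) ^ q := by
          refine mul_le_mul_of_nonneg_left (Finset.sum_le_sum fun ε _ => ?_)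
            (Real.rpow_nonneg hC.le _)
          exact mul_le_mul_of_nonneg_left (step2 ε) (by positivity)
      _ = C ^ q * (C ^ n * (‖T‖ * w0) * W) ^ q := by
          rw [← Finset.sum_mul]
          have hw' : ∑ _ε : Fin m → Bool, ((2:ℝ) ^ m)⁻¹ = 1 := by
            rw [Finset.sum_const, Finset.card_univ, nsmul_eq_mul]
            have : Fintype.card (Fin m → Bool) = 2 ^ m := by simp [Fintype.card_fun]
            rw [this]; push_cast; exact mul_inv_cancel₀ (by positivity)
          rw [hw', one_mul]
      _ = (C ^ (n+1) * ‖T‖ * ∏ i : Fin (n+1), weakNorm 𝕜 1 (x i)) ^ q := by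
          rw [← Real.mul_rpow hC.le (by positivity)]
          congr 1
          rw [Fin.prod_univ_succ, ← hw0, ← hW]
          ring


/-- If `F` has cotype `q ≥ 2`, then every bounded multilinear operator into `F` is
multiple `(q;1,…,1)`-summing, with constant `C‖T‖`. -/
theorem multiple_q_one_summing_of_cotype {𝕜 : Type*} [RCLike 𝕜] {n : ℕ} {E : Fin n → Type*}
    [∀ i, NormedAddCommGroup (E i)] [∀ i, NormedSpace 𝕜 (E i)] [∀ i, CompleteSpace (E i)]
    {F : Type*} [NormedAddCommGroup F] [NormedSpace 𝕜 F] [CompleteSpace F]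
    (q : ℝ) (hq : 2 ≤ q) (hcot : HasCotype q F)
    (T : ContinuousMultilinearMap 𝕜 E F) :
    ∃ C, 0 ≤ C ∧ ∀ (m : ℕ) (x : ∀ i, Fin m → E i),
      (∑ j : Fin n → Fin m, ‖T (fun i => x i (j i))‖ ^ q) ^ q⁻¹ ≤
        C * ‖T‖ * ∏ i, weakNorm 𝕜 1 (x i) := by
  obtain ⟨C, hC, hcotC⟩ := hcot
  refine ⟨C ^ n, pow_nonneg hC.le n, fun m x => ?_⟩
  have h := aux_summing q C hq hC hcotC n E _ _ T m x
  have hbase : 0 ≤ C ^ n * ‖T‖ * ∏ i, weakNorm 𝕜 1 (x i) :=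
    mul_nonneg (mul_nonneg (pow_nonneg hC.le n) (norm_nonneg T))
      (Finset.prod_nonneg fun i _ => weakNorm_nonneg _)
  have hq0 : (0:ℝ) < q := by linarith
  have h2 := Real.rpow_le_rpow
    (Finset.sum_nonneg fun j _ => Real.rpow_nonneg (norm_nonneg _) _) h (inv_nonneg.2 hq0.le)
  rwa [← Real.rpow_mul hbase, mul_inv_cancel₀ hq0.ne', Real.rpow_one] at h2
end

section
/- For every bounded bilinear form T on ℓ₂ × ℓ₂ and every 2 ≤ r < ∞, the unit-vector coefficients satisfy (∑_{j,k=1}^m |T(e_j,e_k)|^r)^{1/r} ≤ m^{1/r} ‖T‖ for all m, and the exponent 1/r is best possible (there are bilinear forms T_m on ℓ₂^m×ℓ₂^m with ‖T_m‖ ≤ d·m^{1/2} and (∑_{j,k}|T_m(e_j,e_k)|^r)^{1/r} = m^{2/r}). -/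
open scoped BigOperators

section BilinearAux

open scoped ComplexConjugate

variable {𝕜 : Type*} [RCLike 𝕜]

/-- Elementary sign: `(-1)` if both bits set, else `1`. -/
def Hb (a b : Bool) : 𝕜 := if a && b then -1 else 1

/-- Sylvester–Hadamard sign. -/
def Hmat {n : ℕ} (v w : Fin n → Bool) : 𝕜 := ∏ i, Hb (v i) (w i)

lemma Hb_comm (a b : Bool) : (Hb a b : 𝕜) = Hb b a := by
  simp [Hb, Bool.and_comm]

lemma Hmat_comm {n : ℕ} (v w : Fin n → Bool) : (Hmat v w : 𝕜) = Hmat w v := by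
  simp [Hmat, Hb_comm]

lemma Hmat_sign {n : ℕ} (v w : Fin n → Bool) : (Hmat v w : 𝕜) = 1 ∨ (Hmat v w : 𝕜) = -1 := by
  refine Finset.prod_induction _ (fun x => x = 1 ∨ x = -1) ?_ (Or.inl rfl) ?_
  · rintro a b (rfl|rfl) (rfl|rfl) <;> simp
  · intro i _
    by_cases h : v i && w i <;> simp [Hb, h]

lemma Hb_sum {𝕜 : Type*} [RCLike 𝕜] (a b : Bool) :
    ∑ c : Bool, (Hb a c : 𝕜) * Hb b c = if a = b then 2 else 0 := by
  cases a <;> cases b <;> simp [Hb] <;> norm_num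

lemma Hmat_sum {n : ℕ} (v w : Fin n → Bool) :
    ∑ u : Fin n → Bool, (Hmat v u : 𝕜) * Hmat w u = if v = w then (2:𝕜)^n else 0 := by
  classical
  have key : ∑ u : Fin n → Bool, (Hmat v u : 𝕜) * Hmat w u
      = ∏ i, ∑ c : Bool, (Hb (v i) c : 𝕜) * Hb (w i) c := by
    rw [Finset.prod_univ_sum]
    rw [← Fintype.piFinset_univ]
    exact Finset.sum_congr rfl fun u _ => by
      rw [Hmat, Hmat, ← Finset.prod_mul_distrib]
  rw [key]
  simp_rw [Hb_sum]
  by_cases h : v = w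
  · subst h; simp
  · obtain ⟨i, hi⟩ := Function.ne_iff.mp h
    rw [if_neg h]
    exact Finset.prod_eq_zero (Finset.mem_univ i) (by simp [hi])

lemma Hmat_conj {n : ℕ} (v w : Fin n → Bool) : conj (Hmat v w : 𝕜) = Hmat v w := by
  rcases Hmat_sign (𝕜 := 𝕜) v w with h | h <;> rw [h] <;> simp

lemma parseval {n m : ℕ} (ι : Fin m → (Fin n → Bool)) (hι : Function.Injective ι)
    (y : Fin m → 𝕜) :
    ∑ v : Fin n → Bool, ‖∑ k, (Hmat v (ι k) : 𝕜) * y k‖ ^ 2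
      = 2 ^ n * ∑ k, ‖y k‖ ^ 2 := by
  classical
  have key : ∑ v : Fin n → Bool, ((‖∑ k, (Hmat v (ι k) : 𝕜) * y k‖ : 𝕜) ^ 2)
      = ((2:𝕜) ^ n) * ∑ k, ((‖y k‖ : 𝕜)) ^ 2 := by
    have expand : ∀ v : Fin n → Bool,
        ((‖∑ k, (Hmat v (ι k) : 𝕜) * y k‖ : 𝕜) ^ 2)
          = ∑ k, ∑ k', (Hmat v (ι k) : 𝕜) * Hmat v (ι k') * (y k * conj (y k')) := by
      intro v
      rw [← RCLike.mul_conj, map_sum, Finset.sum_mul_sum]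
      refine Finset.sum_congr rfl fun k _ => Finset.sum_congr rfl fun k' _ => by
        rw [map_mul, Hmat_conj]; ring
    simp_rw [expand]
    rw [Finset.sum_comm]
    have swap2 : ∀ k, ∑ v : Fin n → Bool, ∑ k',
          (Hmat v (ι k) : 𝕜) * Hmat v (ι k') * (y k * conj (y k'))
        = ∑ k', (∑ v : Fin n → Bool, (Hmat v (ι k) : 𝕜) * Hmat v (ι k')) * (y k * conj (y k')) := by
      intro k
      rw [Finset.sum_comm]
      exact Finset.sum_congr rfl fun k' _ => by rw [Finset.sum_mul]
    simp_rw [swap2]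
    have orth : ∀ k k' : Fin m, (∑ v : Fin n → Bool, (Hmat v (ι k) : 𝕜) * Hmat v (ι k'))
        = if k = k' then (2:𝕜)^n else 0 := by
      intro k k'
      have : ∀ v, (Hmat v (ι k) : 𝕜) * Hmat v (ι k') = Hmat (ι k) v * Hmat (ι k') v := by
        intro v; rw [Hmat_comm (v := v) (w := ι k), Hmat_comm (v := v) (w := ι k')]
      simp_rw [this, Hmat_sum, hι.eq_iff]
    simp_rw [orth]
    rw [Finset.mul_sum]
    refine Finset.sum_congr rfl fun k _ => ?_
    rw [Finset.sum_eq_single k (fun b _ hb => by rw [if_neg (Ne.symm hb), zero_mul])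
      (fun h => absurd (Finset.mem_univ k) h)]
    rw [if_pos rfl, RCLike.mul_conj]
  exact_mod_cast key

lemma bilinear_bound {n m : ℕ} (ι : Fin m → (Fin n → Bool)) (hι : Function.Injective ι)
    (x y : Fin m → 𝕜) (hx : ∑ j, ‖x j‖ ^ 2 ≤ 1) (hy : ∑ k, ‖y k‖ ^ 2 ≤ 1) :
    ‖∑ j, ∑ k, (Hmat (ι j) (ι k) : 𝕜) * x j * y k‖ ≤ Real.sqrt (2 ^ n) := by
  classical
  set A : Fin m → 𝕜 := fun j => ∑ k, (Hmat (ι j) (ι k) : 𝕜) * y k with hA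
  have step1 : ‖∑ j, ∑ k, (Hmat (ι j) (ι k) : 𝕜) * x j * y k‖ ≤ ∑ j, ‖x j‖ * ‖A j‖ := by
    have : ∀ j, ∑ k, (Hmat (ι j) (ι k) : 𝕜) * x j * y k = x j * A j := by
      intro j
      rw [hA, Finset.mul_sum]
      exact Finset.sum_congr rfl fun k _ => by ring
    simp_rw [this]
    refine (norm_sum_le _ _).trans ?_
    exact le_of_eq (Finset.sum_congr rfl fun j _ => norm_mul _ _)
  have step2 : ∑ j, ‖x j‖ * ‖A j‖ ≤
      Real.sqrt (∑ j, ‖x j‖ ^ 2) * Real.sqrt (∑ j, ‖A j‖ ^ 2) :=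
    Real.sum_mul_le_sqrt_mul_sqrt _ _ _
  have hAsum : ∑ j, ‖A j‖ ^ 2 ≤ 2 ^ n := by
    have sub : ∑ j, ‖A j‖ ^ 2 ≤ ∑ v : Fin n → Bool, ‖∑ k, (Hmat v (ι k) : 𝕜) * y k‖ ^ 2 := by
      have him : ∑ j : Fin m, ‖A j‖ ^ 2
          = ∑ v ∈ Finset.univ.image ι, ‖∑ k, (Hmat v (ι k) : 𝕜) * y k‖ ^ 2 :=
        (Finset.sum_image (g := ι) (s := Finset.univ)
          (f := fun v => ‖∑ k, (Hmat v (ι k) : 𝕜) * y k‖ ^ 2)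
          (fun a _ b _ h => hι h)).symm
      rw [him]
      exact Finset.sum_le_sum_of_subset_of_nonneg (Finset.subset_univ _)
        (fun v _ _ => by positivity)
    rw [parseval ι hι y] at sub
    refine sub.trans ?_
    nlinarith [Finset.sum_nonneg (fun k (_ : k ∈ Finset.univ) => sq_nonneg ‖y k‖),
      pow_pos (by norm_num : (0:ℝ) < 2) n]
  calc ‖∑ j, ∑ k, (Hmat (ι j) (ι k) : 𝕜) * x j * y k‖
      ≤ Real.sqrt (∑ j, ‖x j‖ ^ 2) * Real.sqrt (∑ j, ‖A j‖ ^ 2) := step1.trans step2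
    _ ≤ Real.sqrt 1 * Real.sqrt (2 ^ n) :=
        mul_le_mul (Real.sqrt_le_sqrt hx) (Real.sqrt_le_sqrt hAsum)
          (Real.sqrt_nonneg _) (Real.sqrt_nonneg _)
    _ = Real.sqrt (2 ^ n) := by rw [Real.sqrt_one, one_mul]

lemma euclid_sum_sq_le {m : ℕ} (x : EuclideanSpace 𝕜 (Fin m)) (hx : ‖x‖ ≤ 1) :
    ∑ j, ‖x j‖ ^ 2 ≤ 1 := by
  have h1 : Real.sqrt (∑ j, ‖x j‖ ^ 2) ≤ 1 := by
    rw [← EuclideanSpace.norm_eq]; exact hx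
  have h2 : ∑ j, ‖x j‖ ^ 2 = Real.sqrt (∑ j, ‖x j‖ ^ 2) ^ 2 := by
    rw [Real.sq_sqrt (Finset.sum_nonneg fun j _ => sq_nonneg _)]
  rw [h2]
  nlinarith [Real.sqrt_nonneg (∑ j, ‖x j‖ ^ 2)]

lemma part2 (r : ℝ) (hr : 2 ≤ r) :
    ∃ d : ℝ, 0 < d ∧ ∀ m : ℕ, ∃ ε : Fin m → Fin m → 𝕜,
      (∀ j k, ε j k = 1 ∨ ε j k = -1) ∧
      (∀ x y : EuclideanSpace 𝕜 (Fin m), ‖x‖ ≤ 1 → ‖y‖ ≤ 1 →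
        ‖∑ j : Fin m, ∑ k : Fin m, ε j k * x j * y k‖ ≤ d * Real.sqrt m) ∧
      (∑ j : Fin m, ∑ k : Fin m, ‖ε j k‖ ^ r) ^ r⁻¹ = (m : ℝ) ^ (2 / r) := by
  classical
  have hr0 : (0:ℝ) < r := by linarith
  refine ⟨Real.sqrt 2, Real.sqrt_pos.mpr (by norm_num), fun m => ?_⟩
  rcases Nat.eq_zero_or_pos m with hm | hm
  · subst hm
    refine ⟨fun j k => 1, fun j => j.elim0, fun x y _ _ => ?_, ?_⟩
    · simp [Real.sqrt_nonneg]
    · simp [Real.zero_rpow (by positivity : r⁻¹ ≠ 0),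
        Real.zero_rpow (by positivity : 2 / r ≠ 0)]
  · set n := Nat.clog 2 m with hn
    have hmn : m ≤ 2 ^ n := Nat.le_pow_clog (by norm_num) m
    have h2n : 2 ^ n ≤ 2 * m := by
      rcases eq_or_lt_of_le (show 1 ≤ m from hm) with hm1 | hm1
      · rw [hn, ← hm1, Nat.clog_one_right]; norm_num
      · have h1 : 2 ^ (n - 1) < m := Nat.pow_pred_clog_lt_self (by norm_num) hm1
        have hn1 : 1 ≤ n := Nat.clog_pos (by norm_num) hm1
        have : 2 ^ n = 2 * 2 ^ (n - 1) := by
          rw [← pow_succ']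
          congr 1
          omega
        omega
    set ι : Fin m → (Fin n → Bool) :=
      fun j => fun i => finTwoEquiv ((finFunctionFinEquiv.symm (Fin.castLE hmn j)) i) with hι
    have hιinj : Function.Injective ι := by
      intro a b hab
      have : finFunctionFinEquiv.symm (Fin.castLE hmn a)
          = finFunctionFinEquiv.symm (Fin.castLE hmn b) := by
        funext i
        exact finTwoEquiv.injective (congrFun hab i)
      have := finFunctionFinEquiv.symm.injective this
      exact Fin.castLE_injective hmn this
    refine ⟨fun j k => Hmat (ι j) (ι k), fun j k => Hmat_sign _ _, fun x y hx hy => ?_, ?_⟩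
    · calc ‖∑ j, ∑ k, (Hmat (ι j) (ι k) : 𝕜) * x j * y k‖
          ≤ Real.sqrt (2 ^ n) :=
            bilinear_bound ι hιinj x y (euclid_sum_sq_le x hx) (euclid_sum_sq_le y hy)
        _ ≤ Real.sqrt (2 * m) := by
            refine Real.sqrt_le_sqrt ?_
            exact_mod_cast h2n
        _ = Real.sqrt 2 * Real.sqrt m := Real.sqrt_mul (by norm_num) _
    · have hone : ∀ j k : Fin m, ‖(Hmat (ι j) (ι k) : 𝕜)‖ ^ r = 1 := by
        intro j k
        rcases Hmat_sign (𝕜 := 𝕜) (ι j) (ι k) with h | h <;>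
          rw [h] <;> simp [Real.one_rpow]
      simp_rw [hone]
      rw [Finset.sum_const, Finset.sum_const]
      simp only [Finset.card_univ, Fintype.card_fin, nsmul_eq_mul, mul_one]
      rw [show ((m:ℝ) * m) = (m:ℝ) ^ (2:ℕ) by ring, ← Real.rpow_natCast (m:ℝ) 2,
        ← Real.rpow_mul (Nat.cast_nonneg m)]
      norm_num
      rw [div_eq_mul_inv]

noncomputable def eNat (n : ℕ) : lp (fun _ : ℕ => 𝕜) 2 := lp.single 2 n (1:𝕜)

lemma norm_eNat (n : ℕ) : ‖(eNat n : lp (fun _ : ℕ => 𝕜) 2)‖ = 1 := by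
  have := lp.norm_single (E := fun _ : ℕ => 𝕜) (p := 2) (by norm_num) n (1:𝕜)
  simpa [eNat] using this

lemma orthonormal_eNat : Orthonormal 𝕜 (eNat (𝕜 := 𝕜)) := by
  rw [orthonormal_iff_ite]
  intro i j
  rw [eNat, eNat, lp.inner_single_left, RCLike.inner_apply, lp.single_apply]
  split_ifs with h
  · subst h; simp
  · simp [Pi.single_apply, h]

set_option maxHeartbeats 2000000 in
lemma row_bound (T : ContinuousMultilinearMap 𝕜 (fun _ : Fin 2 => lp (fun _ : ℕ => 𝕜) 2) 𝕜)
    (m : ℕ) (j : ℕ) :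
    ∑ k : Fin m, ‖T ![eNat j, eNat (k:ℕ)]‖ ^ (2:ℕ) ≤ ‖T‖ ^ (2:ℕ) := by
  classical
  set φ : lp (fun _ : ℕ => 𝕜) 2 →L[𝕜] 𝕜 := T.toContinuousLinearMap ![eNat j, 0] 1 with hφ
  have hφ_apply : ∀ y, φ y = T ![eNat j, y] := by
    intro y
    have hupd : Function.update ![eNat j, (0 : lp (fun _ : ℕ => 𝕜) 2)] 1 y = ![eNat j, y] := by
      funext i
      fin_cases i <;> simp [Function.update]
    show T (Function.update ![eNat j, 0] 1 y) = _
    rw [hupd]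
  have hφ_norm : ‖φ‖ ≤ ‖T‖ := by
    refine ContinuousLinearMap.opNorm_le_bound _ (norm_nonneg T) fun y => ?_
    rw [hφ_apply]
    calc ‖T ![eNat j, y]‖ ≤ ‖T‖ * ∏ i : Fin 2, ‖(![eNat j, y]) i‖ := T.le_opNorm _
      _ = ‖T‖ * ‖y‖ := by
          rw [Fin.prod_univ_two]
          simp [norm_eNat]
  set v := (InnerProductSpace.toDual 𝕜 (lp (fun _ : ℕ => 𝕜) 2)).symm φ with hv
  have hv_apply : ∀ y, @inner 𝕜 _ _ v y = φ y := fun y =>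
    InnerProductSpace.toDual_symm_apply
  have hv_norm : ‖v‖ = ‖φ‖ := LinearIsometryEquiv.norm_map _ φ
  have bessel : ∑ k : Fin m, ‖@inner 𝕜 _ _ (eNat (k:ℕ) : lp (fun _ : ℕ => 𝕜) 2) v‖ ^ 2
      ≤ ‖v‖ ^ 2 := by
    have horth : Orthonormal 𝕜 (fun k : Fin m => (eNat (k:ℕ) : lp (fun _ : ℕ => 𝕜) 2)) :=
      orthonormal_eNat.comp _ Fin.val_injective
    exact horth.sum_inner_products_le v
  calc ∑ k : Fin m, ‖T ![eNat j, eNat (k:ℕ)]‖ ^ (2:ℕ)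
      = ∑ k : Fin m, ‖@inner 𝕜 _ _ (eNat (k:ℕ) : lp (fun _ : ℕ => 𝕜) 2) v‖ ^ 2 := by
        refine Finset.sum_congr rfl fun k _ => ?_
        rw [← norm_inner_symm, hv_apply, hφ_apply]
    _ ≤ ‖v‖ ^ 2 := bessel
    _ = ‖φ‖ ^ 2 := by rw [hv_norm]
    _ ≤ ‖T‖ ^ 2 := by
        have := norm_nonneg φ
        nlinarith

lemma rpow_le_aux {a M r : ℝ} (ha : 0 ≤ a) (haM : a ≤ M) (hr : 2 ≤ r) :
    a ^ r ≤ M ^ (r - 2) * a ^ (2:ℕ) := by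
  have hM : 0 ≤ M := ha.trans haM
  rcases eq_or_lt_of_le ha with h0 | h0
  · rw [← h0, Real.zero_rpow (by positivity : r ≠ 0)]
    positivity
  · have : a ^ r = a ^ (r - 2) * a ^ (2:ℕ) := by
      rw [← Real.rpow_natCast a 2, ← Real.rpow_add h0]
      norm_num
    rw [this]
    exact mul_le_mul_of_nonneg_right
      (Real.rpow_le_rpow ha haM (by linarith)) (pow_nonneg ha 2)

lemma part1 (r : ℝ) (hr : 2 ≤ r)
    (T : ContinuousMultilinearMap 𝕜 (fun _ : Fin 2 => lp (fun _ : ℕ => 𝕜) 2) 𝕜) (m : ℕ) :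
    (∑ j : Fin m, ∑ k : Fin m,
        ‖T ![lp.single 2 (j : ℕ) (1 : 𝕜), lp.single 2 (k : ℕ) (1 : 𝕜)]‖ ^ r) ^ r⁻¹ ≤
      (m : ℝ) ^ r⁻¹ * ‖T‖ := by
  have hr0 : (0:ℝ) < r := by linarith
  have hM : (0:ℝ) ≤ ‖T‖ := norm_nonneg T
  have hTle : ∀ j k : ℕ, ‖T ![eNat j, eNat k]‖ ≤ ‖T‖ := by
    intro j k
    calc ‖T ![eNat j, eNat k]‖ ≤ ‖T‖ * ∏ i : Fin 2, ‖(![eNat j, eNat k] : Fin 2 → _) i‖ :=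
          T.le_opNorm _
      _ = ‖T‖ := by rw [Fin.prod_univ_two]; simp [norm_eNat]
  have main : ∑ j : Fin m, ∑ k : Fin m, ‖T ![eNat (j:ℕ), eNat (k:ℕ)]‖ ^ r
      ≤ (m : ℝ) * ‖T‖ ^ r := by
    calc ∑ j : Fin m, ∑ k : Fin m, ‖T ![eNat (j:ℕ), eNat (k:ℕ)]‖ ^ r
        ≤ ∑ j : Fin m, ∑ k : Fin m,
            ‖T‖ ^ (r - 2) * ‖T ![eNat (j:ℕ), eNat (k:ℕ)]‖ ^ (2:ℕ) := by
          refine Finset.sum_le_sum fun j _ => Finset.sum_le_sum fun k _ =>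
            rpow_le_aux (norm_nonneg _) (hTle _ _) hr
      _ = ∑ j : Fin m, ‖T‖ ^ (r - 2) * ∑ k : Fin m, ‖T ![eNat (j:ℕ), eNat (k:ℕ)]‖ ^ (2:ℕ) := by
          refine Finset.sum_congr rfl fun j _ => ?_
          rw [Finset.mul_sum]
      _ ≤ ∑ j : Fin m, ‖T‖ ^ (r - 2) * ‖T‖ ^ (2:ℕ) := by
          refine Finset.sum_le_sum fun j _ => ?_
          exact mul_le_mul_of_nonneg_left (row_bound T m (j:ℕ))
            (Real.rpow_nonneg hM _)
      _ = (m : ℝ) * ‖T‖ ^ r := by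
          rw [Finset.sum_const, Finset.card_univ, Fintype.card_fin, nsmul_eq_mul]
          congr 1
          rw [← Real.rpow_natCast ‖T‖ 2, ← Real.rpow_add_of_nonneg hM (by linarith) (by norm_num)]
          norm_num
  have hnn : (0:ℝ) ≤ ∑ j : Fin m, ∑ k : Fin m, ‖T ![eNat (j:ℕ), eNat (k:ℕ)]‖ ^ r := by
    refine Finset.sum_nonneg fun j _ => Finset.sum_nonneg fun k _ => ?_
    positivity
  have final := Real.rpow_le_rpow hnn main (le_of_lt (inv_pos.mpr hr0))
  have hrhs : ((m : ℝ) * ‖T‖ ^ r) ^ r⁻¹ = (m : ℝ) ^ r⁻¹ * ‖T‖ := by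
    rw [Real.mul_rpow (Nat.cast_nonneg m) (Real.rpow_nonneg hM r)]
    congr 1
    rw [← Real.rpow_mul hM, mul_inv_cancel₀ (ne_of_gt hr0), Real.rpow_one]
  rw [hrhs] at final
  exact final

end BilinearAux

/-- For every bounded bilinear form `T` on `ℓ₂ × ℓ₂` and `2 ≤ r < ∞`, the unit-vector
coefficients satisfy `(∑_{j,k<m} |T(e_j,e_k)|^r)^{1/r} ≤ m^{1/r} ‖T‖`, and the exponent
`1/r` is best possible: there are sign bilinear forms `T_m` on `ℓ₂^m × ℓ₂^m` of norm at
most `d √m` whose coefficient `ℓ_r` sum equals `m^{2/r}`. -/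
theorem bilinear_coefficients_estimate {𝕜 : Type*} [RCLike 𝕜] (r : ℝ) (hr : 2 ≤ r) :
    (∀ (T : ContinuousMultilinearMap 𝕜 (fun _ : Fin 2 => lp (fun _ : ℕ => 𝕜) 2) 𝕜)
      (m : ℕ),
      (∑ j : Fin m, ∑ k : Fin m,
          ‖T ![lp.single 2 (j : ℕ) (1 : 𝕜), lp.single 2 (k : ℕ) (1 : 𝕜)]‖ ^ r) ^ r⁻¹ ≤
        (m : ℝ) ^ r⁻¹ * ‖T‖) ∧
    (∃ d : ℝ, 0 < d ∧ ∀ m : ℕ, ∃ ε : Fin m → Fin m → 𝕜,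
      (∀ j k, ε j k = 1 ∨ ε j k = -1) ∧
      (∀ x y : EuclideanSpace 𝕜 (Fin m), ‖x‖ ≤ 1 → ‖y‖ ≤ 1 →
        ‖∑ j : Fin m, ∑ k : Fin m, ε j k * x j * y k‖ ≤ d * Real.sqrt m) ∧
      (∑ j : Fin m, ∑ k : Fin m, ‖ε j k‖ ^ r) ^ r⁻¹ = (m : ℝ) ^ (2 / r)) := by
  exact ⟨fun T m => part1 r hr T m, part2 r hr⟩
end
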